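/- Let f : [a,b] → X be continuous, G ⊂ (a,b) open with complement H := [a,b] \ G, and let (a_t,b_t), t ∈ T, be the components of G. If V(f,[a,b]) = ∑_{t∈T} V(f,[a_t,b_t]) < ∞, then H¹(f(H)) = 0. -/

import Mathlib

open MeasureTheory

/-- Lemma H1L(ii): if the variation on `[a,b]` equals the (finite) sum of variations
over closures of the components of `G`, then the image of `H = [a,b] \ G` is `ℋ¹`-null. -/
theorem stmt_6 {X : Type*} [NormedAddCommGroup X] [NormedSpace ℝ X]
    [MeasurableSpace X] [BorelSpace X]
    (a b : ℝ) (hab : a < b) (f : ℝ → X) (hf : ContinuousOn f (Set.Icc a b))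
    (G : Set ℝ) (hG : G ⊆ Set.Ioo a b)
    (T : Type*) (l r : T → ℝ) (hlr : ∀ t, l t < r t)
    (hunion : G = ⋃ t, Set.Ioo (l t) (r t))
    (hdisj : Pairwise (Function.onFun Disjoint fun t => Set.Ioo (l t) (r t)))
    (hmax : ∀ t, l t ∉ G ∧ r t ∉ G)
    (heq : eVariationOn f (Set.Icc a b) = ∑' t, eVariationOn f (Set.Icc (l t) (r t)))
    (hfin : eVariationOn f (Set.Icc a b) ≠ ⊤) :
    μH[1] (f '' (Set.Icc a b \ G)) = 0 := by
  classical
  set s : Set ℝ := Set.Icc a b with hs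
  have ha : a ∈ s := Set.left_mem_Icc.2 hab.le
  have hb : b ∈ s := Set.right_mem_Icc.2 hab.le
  have hlbv : LocallyBoundedVariationOn f s := fun x y _ _ =>
    ne_top_of_le_ne_top hfin (eVariationOn.mono f Set.inter_subset_left)
  set φ : ℝ → ℝ := variationOnFromTo f s a with hφ
  have hmono : MonotoneOn φ s := variationOnFromTo.monotoneOn hlbv ha
  -- endpoints of components lie in s
  have hIcc : ∀ t, Set.Icc (l t) (r t) ⊆ s := by
    intro t
    have h1 : Set.Ioo (l t) (r t) ⊆ Set.Ioo a b := fun x hx =>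
      hG (by rw [hunion]; exact Set.mem_iUnion.2 ⟨t, hx⟩)
    have := closure_mono h1
    rwa [closure_Ioo (hlr t).ne, closure_Ioo hab.ne] at this
  have hl : ∀ t, l t ∈ s := fun t => hIcc t ⟨le_rfl, (hlr t).le⟩
  have hr : ∀ t, r t ∈ s := fun t => hIcc t ⟨(hlr t).le, le_rfl⟩
  -- difference of φ is a variation
  have hdiffφ : ∀ {x y : ℝ}, x ∈ s → y ∈ s → x ≤ y →
      ENNReal.ofReal (φ y - φ x) = eVariationOn f (s ∩ Set.Icc x y) := by
    intro x y hx hy hxy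
    have hadd := variationOnFromTo.add hlbv ha hx hy
    have : φ y - φ x = variationOnFromTo f s x y := by
      show variationOnFromTo f s a y - variationOnFromTo f s a x = _
      linarith [hadd]
    rw [this, variationOnFromTo.eq_of_le f s hxy,
      ENNReal.ofReal_toReal (hlbv x y hx hy)]
  -- key estimate : f is 1-Lipschitz w.r.t. φ
  have hkey : ∀ {x y : ℝ}, x ∈ s → y ∈ s → edist (f x) (f y) ≤ edist (φ x) (φ y) := by
    have main : ∀ {x y : ℝ}, x ∈ s → y ∈ s → x ≤ y →
        edist (f x) (f y) ≤ edist (φ x) (φ y) := by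
      intro x y hx hy hxy
      have h1 : edist (f x) (f y) ≤ eVariationOn f (s ∩ Set.Icc x y) :=
        eVariationOn.edist_le f ⟨hx, le_rfl, hxy⟩ ⟨hy, hxy, le_rfl⟩
      rw [← hdiffφ hx hy hxy] at h1
      refine h1.trans ?_
      rw [edist_dist, Real.dist_eq]
      exact ENNReal.ofReal_le_ofReal (le_abs_self _ |>.trans (by rw [abs_sub_comm]))
    intro x y hx hy
    rcases le_total x y with h | h
    · exact main hx hy h
    · rw [edist_comm, edist_comm (φ x)]; exact main hy hx h
  -- factor f through φ
  set g : ℝ → X := f ∘ Function.invFunOn φ s with hg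
  have hfactor : ∀ x ∈ s, g (φ x) = f x := by
    intro x hx
    have h1 : Function.invFunOn φ s (φ x) ∈ s := Function.invFunOn_apply_mem hx
    have h2 : φ (Function.invFunOn φ s (φ x)) = φ x := Function.invFunOn_apply_eq hx
    have := hkey h1 hx
    rw [h2, edist_self, le_zero_iff, edist_eq_zero] at this
    exact this
  have hglip : LipschitzOnWith 1 g (φ '' (s \ G)) := by
    rintro u ⟨x, hx, rfl⟩ v ⟨y, hy, rfl⟩
    rw [hfactor x hx.1, hfactor y hy.1, ENNReal.coe_one, one_mul]
    exact hkey hx.1 hy.1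
  -- the image under φ of the complement is Lebesgue-null
  have hcount : Countable T :=
    hdisj.countable_of_isOpen_disjoint (fun t => isOpen_Ioo)
      (fun t => Set.nonempty_Ioo.2 (hlr t))
  set U : Set ℝ := ⋃ t, Set.Ioo (φ (l t)) (φ (r t)) with hU
  have hUsub : U ⊆ Set.Icc (φ a) (φ b) := by
    refine Set.iUnion_subset fun t => ?_
    intro x hx
    exact ⟨(hmono ha (hl t) (hl t).1).trans hx.1.le,
      hx.2.le.trans (hmono (hr t) hb (hr t).2)⟩
  have hvarIcc : ∀ t, eVariationOn f (Set.Icc (l t) (r t)) =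
      ENNReal.ofReal (φ (r t) - φ (l t)) := by
    intro t
    rw [hdiffφ (hl t) (hr t) (hlr t).le, Set.inter_eq_right.2 (hIcc t)]
  have hUvol : volume U = eVariationOn f s := by
    have hdisj' : Pairwise (Function.onFun Disjoint
        fun t => Set.Ioo (φ (l t)) (φ (r t))) := by
      intro t u htu
      have hd := hdisj htu
      have horder : r t ≤ l u ∨ r u ≤ l t := by
        by_contra h
        push_neg at h
        have h1 : max (l t) (l u) < min (r t) (r u) := by
          rcases max_cases (l t) (l u) with ⟨hm, _⟩ | ⟨hm, _⟩ <;>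
          rcases min_cases (r t) (r u) with ⟨hn, _⟩ | ⟨hn, _⟩ <;>
          rw [hm, hn]
          · exact hlr t
          · exact h.2
          · exact h.1
          · exact hlr u
        obtain ⟨z, hz⟩ := Set.nonempty_Ioo.2 h1
        refine (Set.not_disjoint_iff.2 ⟨z, ?_, ?_⟩) hd
        · exact (Set.mem_Ioo.2 ⟨(le_max_left _ _).trans_lt hz.1,
            hz.2.trans_le (min_le_left _ _)⟩ : z ∈ Set.Ioo (l t) (r t))
        · exact (Set.mem_Ioo.2 ⟨(le_max_right _ _).trans_lt hz.1,
            hz.2.trans_le (min_le_right _ _)⟩ : z ∈ Set.Ioo (l u) (r u))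
      rcases horder with h | h
      · have : φ (r t) ≤ φ (l u) := hmono (hr t) (hl u) h
        exact Set.disjoint_left.2 fun x hx hx' => absurd (hx.2.trans_le (this.trans hx'.1.le)) (lt_irrefl x)
      · have : φ (r u) ≤ φ (l t) := hmono (hr u) (hl t) h
        exact Set.disjoint_left.2 fun x hx hx' => absurd (hx'.2.trans_le (this.trans hx.1.le)) (lt_irrefl x)
    rw [hU, measure_iUnion hdisj' (fun t => measurableSet_Ioo)]
    simp_rw [Real.volume_Ioo, ← hvarIcc]
    exact heq.symm
  have hIccvol : volume (Set.Icc (φ a) (φ b)) = eVariationOn f s := by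
    rw [Real.volume_Icc, hdiffφ ha hb hab.le, Set.inter_eq_left.2 (fun x hx => hx)]
  have hnull : volume (Set.Icc (φ a) (φ b) \ U) = 0 := by
    have hUm : MeasurableSet U := MeasurableSet.iUnion fun t => measurableSet_Ioo
    rw [measure_diff hUsub hUm.nullMeasurableSet (by rw [hUvol]; exact hfin),
      hUvol, hIccvol, tsub_self]
  -- φ '' (s \ G) is contained in that null set
  have hφsub : φ '' (s \ G) ⊆ Set.Icc (φ a) (φ b) \ U := by
    rintro _ ⟨x, ⟨hx, hxG⟩, rfl⟩
    refine ⟨⟨hmono ha hx hx.1, hmono hx hb hx.2⟩, ?_⟩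
    intro hxU
    obtain ⟨t, hxt⟩ := Set.mem_iUnion.1 hxU
    have hxnot : x ∉ Set.Ioo (l t) (r t) := fun hmem =>
      hxG (hunion ▸ Set.mem_iUnion.2 ⟨t, hmem⟩)
    rcases lt_or_ge (l t) x with h1 | h1
    · rcases lt_or_ge x (r t) with h2 | h2
      · exact hxnot ⟨h1, h2⟩
      · exact absurd (hxt.2.trans_le (hmono (hr t) hx h2)) (lt_irrefl _)
    · exact absurd (hxt.1.trans_le (hmono hx (hl t) h1)) (lt_irrefl _)
  -- conclude
  have himg : f '' (s \ G) ⊆ g '' (φ '' (s \ G)) := by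
    rintro _ ⟨x, hx, rfl⟩
    exact ⟨φ x, Set.mem_image_of_mem φ hx, hfactor x hx.1⟩
  refine le_antisymm ?_ (zero_le)
  calc μH[1] (f '' (s \ G)) ≤ μH[1] (g '' (φ '' (s \ G))) := measure_mono himg
    _ ≤ ((1 : NNReal) : ENNReal) ^ (1 : ℝ) * μH[1] (φ '' (s \ G)) :=
        hglip.hausdorffMeasure_image_le zero_le_one
    _ = μH[1] (φ '' (s \ G)) := by simp
    _ ≤ μH[1] (Set.Icc (φ a) (φ b) \ U) := measure_mono hφsub
    _ = volume (Set.Icc (φ a) (φ b) \ U) := by rw [MeasureTheory.hausdorffMeasure_real]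
    _ = 0 := hnull
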